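/- Let ξ ∈ ℝ³ with ξ ≠ 0, s = |ξ|, ω = ξ/|ξ|, and let D₂(ξ) be the linear operator on (ℂ³_ξ)³ defined by D₂(ξ)(Z, X, Y) = (X, −Z + iξ × Y, −iξ × X). Then: (1) every eigenvalue of D₂(ξ) lies in {0, i√(1+s²), −i√(1+s²)}; (2) for every W ∈ ℂ³ with W·ω = 0 one has D₂(ξ)(isW, 0, −ω × W) = 0; and (3) for η = i√(1+s²) or η = −i√(1+s²) and every W ∈ ℂ³ with W·ω = 0, one has D₂(ξ)(W, ηW, −is ω × W) = η·(W, ηW, −is ω × W). -/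

import Mathlib

set_option maxHeartbeats 1000000

noncomputable section

/-- The cross product `a × b` of a real vector `a ∈ ℝ³` with a complex vector `b ∈ ℂ³`,
taken componentwise. -/
def crossRC3 (a : EuclideanSpace ℝ (Fin 3)) (b : Fin 3 → ℂ) : Fin 3 → ℂ :=
  ![(a 1 : ℂ) * b 2 - (a 2 : ℂ) * b 1,
    (a 2 : ℂ) * b 0 - (a 0 : ℂ) * b 2,
    (a 0 : ℂ) * b 1 - (a 1 : ℂ) * b 0]

/-- The operator `D₂(ξ)(Z, X, Y) = (X, −Z + iξ × Y, −iξ × X)`. -/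
def D2op (ξ : EuclideanSpace ℝ (Fin 3)) (u : (Fin 3 → ℂ) × (Fin 3 → ℂ) × (Fin 3 → ℂ)) :
    (Fin 3 → ℂ) × (Fin 3 → ℂ) × (Fin 3 → ℂ) :=
  (u.2.1, -u.1 + Complex.I • crossRC3 ξ u.2.2, -(Complex.I • crossRC3 ξ u.2.1))

lemma norm_sq_eqC (ξ : EuclideanSpace ℝ (Fin 3)) :
    ((‖ξ‖:ℂ))^2 = (ξ 0:ℂ)^2 + (ξ 1:ℂ)^2 + (ξ 2:ℂ)^2 := by
  have : ‖ξ‖^2 = (ξ 0)^2 + (ξ 1)^2 + (ξ 2)^2 := by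
    rw [EuclideanSpace.norm_eq, Real.sq_sqrt (by positivity)]
    simp [Fin.sum_univ_three, sq_abs]
  exact_mod_cast congrArg (Complex.ofReal ·) this

lemma crossCrossRC (ξ : EuclideanSpace ℝ (Fin 3)) (Z : Fin 3 → ℂ)
    (hZ : (∑ i, Z i * (ξ i : ℂ)) = 0) :
    crossRC3 ξ (crossRC3 ξ Z) = (-((‖ξ‖:ℂ))^2) • Z := by
  have hs := norm_sq_eqC ξ
  rw [Fin.sum_univ_three] at hZ
  funext j
  fin_cases j <;> simp [crossRC3] <;>
    [linear_combination Z 0 * hs + (ξ 0:ℂ) * hZ;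
     linear_combination Z 1 * hs + (ξ 1:ℂ) * hZ;
     linear_combination Z 2 * hs + (ξ 2:ℂ) * hZ]

lemma crossSmulRC (ξ : EuclideanSpace ℝ (Fin 3)) (c : ℂ) (Z : Fin 3 → ℂ) :
    crossRC3 ξ (c • Z) = c • crossRC3 ξ Z := by
  funext j; fin_cases j <;> simp [crossRC3] <;> ring

theorem stmt3 (ξ : EuclideanSpace ℝ (Fin 3)) (hξ : ξ ≠ 0) :
    (∀ η : ℂ, ∀ Z X Y : Fin 3 → ℂ,
      (∑ i, Z i * (ξ i : ℂ)) = 0 → (∑ i, X i * (ξ i : ℂ)) = 0 → (∑ i, Y i * (ξ i : ℂ)) = 0 →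
      (Z, X, Y) ≠ (0 : (Fin 3 → ℂ) × (Fin 3 → ℂ) × (Fin 3 → ℂ)) →
      D2op ξ (Z, X, Y) = η • (Z, X, Y) →
      (η = 0 ∨ η = Complex.I * (Real.sqrt (1 + ‖ξ‖^2) : ℝ) ∨
        η = -(Complex.I * (Real.sqrt (1 + ‖ξ‖^2) : ℝ)))) ∧
    (∀ W : Fin 3 → ℂ, (∑ i, W i * (((‖ξ‖⁻¹ • ξ : EuclideanSpace ℝ (Fin 3)) i : ℝ) : ℂ)) = 0 →
      D2op ξ ((Complex.I * (‖ξ‖ : ℝ)) • W, 0, -(crossRC3 (‖ξ‖⁻¹ • ξ) W)) = 0) ∧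
    (∀ η : ℂ, (η = Complex.I * (Real.sqrt (1 + ‖ξ‖^2) : ℝ) ∨
        η = -(Complex.I * (Real.sqrt (1 + ‖ξ‖^2) : ℝ))) →
      ∀ W : Fin 3 → ℂ, (∑ i, W i * (((‖ξ‖⁻¹ • ξ : EuclideanSpace ℝ (Fin 3)) i : ℝ) : ℂ)) = 0 →
      D2op ξ (W, η • W, (-(Complex.I * (‖ξ‖ : ℝ))) • crossRC3 (‖ξ‖⁻¹ • ξ) W)
        = η • (W, η • W, (-(Complex.I * (‖ξ‖ : ℝ))) • crossRC3 (‖ξ‖⁻¹ • ξ) W)) := by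
  have hs0 : (‖ξ‖:ℂ) ≠ 0 := by
    exact_mod_cast (norm_ne_zero_iff.mpr hξ)
  have hs := norm_sq_eqC ξ
  have ht : ((Real.sqrt (1 + ‖ξ‖^2) : ℝ):ℂ)^2 = 1 + ((‖ξ‖:ℂ))^2 := by
    have : (Real.sqrt (1 + ‖ξ‖^2))^2 = 1 + ‖ξ‖^2 := Real.sq_sqrt (by positivity)
    exact_mod_cast congrArg (Complex.ofReal ·) this
  have hWconv : ∀ W : Fin 3 → ℂ,
      (∑ i, W i * (((‖ξ‖⁻¹ • ξ : EuclideanSpace ℝ (Fin 3)) i : ℝ) : ℂ)) = 0 →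
      (∑ i, W i * (ξ i : ℂ)) = 0 := by
    intro W hW
    simp only [PiLp.smul_apply, smul_eq_mul, Complex.ofReal_mul, Complex.ofReal_inv] at hW
    rw [Fin.sum_univ_three] at hW ⊢
    field_simp at hW
    linear_combination hW
  refine ⟨?_, ?_, ?_⟩
  · -- part 1
    intro η Z X Y hZ hX hY hne hD
    by_cases h0 : η = 0
    · exact Or.inl h0
    right
    have e1 : X = η • Z := congrArg Prod.fst hD
    have e2 : -Z + Complex.I • crossRC3 ξ Y = η • X := congrArg (fun u => u.2.1) hD
    have e3 : -(Complex.I • crossRC3 ξ X) = η • Y := congrArg (fun u => u.2.2) hD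
    have hZne : Z ≠ 0 := by
      intro hz
      apply hne
      have hX0 : X = 0 := by rw [e1, hz, smul_zero]
      have hY0 : Y = 0 := by
        have : η • Y = 0 := by
          rw [← e3, hX0]
          funext j; fin_cases j <;> simp [crossRC3]
        exact (smul_eq_zero.mp this).resolve_left h0
      rw [hz, hX0, hY0]; rfl
    have hYZ : Y = (-Complex.I) • crossRC3 ξ Z := by
      refine smul_right_injective (Fin 3 → ℂ) h0 ?_
      show η • Y = η • ((-Complex.I) • crossRC3 ξ Z)
      rw [← e3, e1, crossSmulRC]
      funext j; fin_cases j <;> simp [crossRC3] <;> ring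
    obtain ⟨j, hj⟩ : ∃ j, Z j ≠ 0 := by
      by_contra h
      push_neg at h
      exact hZne (funext fun j => h j)
    have key : (η^2 + 1 + (‖ξ‖:ℂ)^2) * Z j = 0 := by
      have e2' := congrFun e2 j
      rw [e1, hYZ, crossSmulRC, crossCrossRC ξ Z hZ] at e2'
      simp only [Pi.add_apply, Pi.neg_apply, Pi.smul_apply, smul_eq_mul] at e2'
      linear_combination -e2' + (‖ξ‖:ℂ)^2 * Z j * Complex.I_sq
    have hfac : η^2 + 1 + (‖ξ‖:ℂ)^2 = 0 := by
      rcases mul_eq_zero.mp key with h | h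
      · exact h
      · exact absurd h hj
    have hprod : (η - Complex.I * (Real.sqrt (1 + ‖ξ‖^2) : ℝ))
        * (η + Complex.I * (Real.sqrt (1 + ‖ξ‖^2) : ℝ)) = 0 := by
      linear_combination hfac + ht - ((Real.sqrt (1 + ‖ξ‖^2) : ℝ):ℂ)^2 * Complex.I_sq
    rcases mul_eq_zero.mp hprod with h | h
    · exact Or.inl (sub_eq_zero.mp h)
    · exact Or.inr (eq_neg_of_add_eq_zero_left h)
  · -- part 2
    intro W hW
    have hW' := hWconv W hW
    rw [Fin.sum_univ_three] at hW'
    simp only [D2op, Prod.mk_eq_zero]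
    refine ⟨by trivial, ?_, ?_⟩
    · funext j
      fin_cases j <;>
        simp [crossRC3, PiLp.smul_apply] <;>
        push_cast <;>
        field_simp <;>
        [linear_combination -(Complex.I * W 0) * hs - Complex.I * (ξ 0:ℂ) * hW';
         linear_combination -(Complex.I * W 1) * hs - Complex.I * (ξ 1:ℂ) * hW';
         linear_combination -(Complex.I * W 2) * hs - Complex.I * (ξ 2:ℂ) * hW']
    · funext j
      fin_cases j <;> simp [crossRC3]
  · -- part 3
    intro η hη W hW
    have hW' := hWconv W hW
    rw [Fin.sum_univ_three] at hW'
    have hη2 : η^2 = -(1 + (‖ξ‖:ℂ)^2) := by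
      rcases hη with h | h <;> rw [h] <;>
        linear_combination ((Real.sqrt (1 + ‖ξ‖^2) : ℝ):ℂ)^2 * Complex.I_sq - ht
    simp only [D2op, Prod.smul_mk, Prod.mk.injEq]
    refine ⟨by trivial, ?_, ?_⟩
    · funext j
      fin_cases j <;>
        simp [crossRC3, PiLp.smul_apply] <;>
        push_cast <;>
        field_simp <;>
        [linear_combination (-W 0) * hη2 + W 0 * hs + (ξ 0:ℂ) * hW' + (W 0 * ((ξ 1:ℂ)^2 + (ξ 2:ℂ)^2) - (ξ 0:ℂ) * ((ξ 1:ℂ) * W 1 + (ξ 2:ℂ) * W 2)) * Complex.I_sq;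
         linear_combination (-W 1) * hη2 + W 1 * hs + (ξ 1:ℂ) * hW' + (W 1 * ((ξ 2:ℂ)^2 + (ξ 0:ℂ)^2) - (ξ 1:ℂ) * ((ξ 2:ℂ) * W 2 + (ξ 0:ℂ) * W 0)) * Complex.I_sq;
         linear_combination (-W 2) * hη2 + W 2 * hs + (ξ 2:ℂ) * hW' + (W 2 * ((ξ 0:ℂ)^2 + (ξ 1:ℂ)^2) - (ξ 2:ℂ) * ((ξ 0:ℂ) * W 0 + (ξ 1:ℂ) * W 1)) * Complex.I_sq]
    · funext j
      fin_cases j <;>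
        simp [crossRC3, PiLp.smul_apply] <;>
        push_cast <;>
        field_simp <;>
        ring

end
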